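/- Let ε ∈ [0,1), M > 1, and let 𝓟 and 𝓔 be nonempty sets of density matrices on ℂ^d. Then there exists a CPTP map F from 2×2 complex matrices to d×d complex matrices satisfying (i) F(π_{M′}) ∈ 𝓔 for every M′ ∈ [M,∞) and (ii) T(F(|1⟩⟨1|), ρ) ≤ ε for some ρ ∈ 𝓟, if and only if there exist ω ∈ B_ε(𝓟) and τ in the topological closure of 𝓔 such that (1−λ)τ + λω ∈ 𝓔 for every λ ∈ (0, 1/M]. -/

import Mathlib

open Matrix ComplexOrder

/-- The positive semidefinite square root (removed from Mathlib; old definition restored). -/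
noncomputable def Matrix.PosSemidef.sqrt {n 𝕜 : Type*} [Fintype n] [DecidableEq n] [RCLike 𝕜]
    {A : Matrix n n 𝕜} (hA : A.PosSemidef) : Matrix n n 𝕜 :=
  hA.1.eigenvectorUnitary.1 * diagonal ((↑) ∘ (√·) ∘ hA.1.eigenvalues) *
  (star hA.1.eigenvectorUnitary : Matrix n n 𝕜)

/-- Trace norm of a complex matrix: the trace of `sqrt(AᴴA)` (sum of singular values). -/
noncomputable def traceNorm {n : Type*} [Fintype n] [DecidableEq n]
    (A : Matrix n n ℂ) : ℝ :=
  ((Matrix.posSemidef_conjTranspose_mul_self A).sqrt.trace).re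

/-- Trace distance `T(X,Y) = ‖X - Y‖₁ / 2`. -/
noncomputable def traceDist {n : Type*} [Fintype n] [DecidableEq n]
    (X Y : Matrix n n ℂ) : ℝ :=
  traceNorm (X - Y) / 2

/-- A density matrix: positive semidefinite with unit trace. -/
def IsDensityMatrix {n : Type*} [Fintype n] (ρ : Matrix n n ℂ) : Prop :=
  ρ.PosSemidef ∧ ρ.trace = 1

/-- The battery Gibbs state `π_M = diag(1 - 1/M, 1/M)`. -/
noncomputable def piM (M : ℝ) : Matrix (Fin 2) (Fin 2) ℂ :=
  Matrix.diagonal ![((1 - 1/M : ℝ) : ℂ), ((1/M : ℝ) : ℂ)]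

/-- The excited battery state `|1⟩⟨1| = diag(0,1)`. -/
def ket1 : Matrix (Fin 2) (Fin 2) ℂ :=
  Matrix.diagonal ![0, 1]

/-- A test (POVM effect): `0 ≤ E ≤ I`. -/
def IsTest {n : Type*} [Fintype n] [DecidableEq n] (E : Matrix n n ℂ) : Prop :=
  E.PosSemidef ∧ (1 - E).PosSemidef

/-- Choi matrix `Σ_{ij} E_{ij} ⊗ F(E_{ij})` of a linear map on matrices. -/
noncomputable def choiMatrix {n m : Type*} [Fintype n] [DecidableEq n] [Fintype m]
    (F : Matrix n n ℂ →ₗ[ℂ] Matrix m m ℂ) :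
    Matrix (n × m) (n × m) ℂ :=
  fun p q => F (Matrix.single p.1 q.1 1) p.2 q.2

/-- Completely positive (positive semidefinite Choi matrix) and trace preserving. -/
def IsCPTP {n m : Type*} [Fintype n] [DecidableEq n] [Fintype m]
    (F : Matrix n n ℂ →ₗ[ℂ] Matrix m m ℂ) : Prop :=
  (choiMatrix F).PosSemidef ∧ ∀ X, (F X).trace = X.trace

/-- `n`-fold Kronecker (tensor) power of a `2 × 2` matrix, indexed by bit strings. -/
def tensPow (A : Matrix (Fin 2) (Fin 2) ℂ) (n : ℕ) :
    Matrix (Fin n → Fin 2) (Fin n → Fin 2) ℂ :=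
  fun x y => ∏ i, A (x i) (y i)

/-- `ε`-ball (in trace distance) of density matrices around a set `𝓟`. -/
noncomputable def metBall {n : Type*} [Fintype n] [DecidableEq n]
    (ε : ℝ) (P : Set (Matrix n n ℂ)) : Set (Matrix n n ℂ) :=
  {ω | IsDensityMatrix ω ∧ ∃ ρ ∈ P, traceDist ω ρ ≤ ε}

/-! ### Auxiliary lemmas -/

lemma isClosed_nonneg' : IsClosed {z : ℂ | 0 ≤ z} := by
  have : {z : ℂ | 0 ≤ z} = (Complex.re ⁻¹' Set.Ici 0) ∩ (Complex.im ⁻¹' {0}) := by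
    ext z; simp [Complex.le_def, eq_comm]
  rw [this]
  exact (isClosed_Ici.preimage Complex.continuous_re).inter
    (isClosed_singleton.preimage Complex.continuous_im)

lemma isClosed_density {n : Type*} [Fintype n] [DecidableEq n] :
    IsClosed {A : Matrix n n ℂ | IsDensityMatrix A} := by
  have h1 : IsClosed {A : Matrix n n ℂ | Aᴴ = A} :=
    isClosed_eq (continuous_id.matrix_conjTranspose) continuous_id
  have h2 : IsClosed {A : Matrix n n ℂ | ∀ x : n → ℂ, 0 ≤ star x ⬝ᵥ A.mulVec x} := by
    have he : {A : Matrix n n ℂ | ∀ x : n → ℂ, 0 ≤ star x ⬝ᵥ A.mulVec x}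
        = ⋂ x : n → ℂ, {A : Matrix n n ℂ | 0 ≤ star x ⬝ᵥ A.mulVec x} := by
      ext A; simp
    rw [he]
    refine isClosed_iInter fun x => ?_
    have hc : Continuous fun A : Matrix n n ℂ => star x ⬝ᵥ A.mulVec x :=
      Continuous.dotProduct continuous_const
        (Continuous.matrix_mulVec continuous_id continuous_const)
    exact isClosed_nonneg'.preimage hc
  have h3 : IsClosed {A : Matrix n n ℂ | A.trace = 1} :=
    isClosed_eq (continuous_id.matrix_trace) continuous_const
  have he2 : {A : Matrix n n ℂ | IsDensityMatrix A}
      = ({A : Matrix n n ℂ | Aᴴ = A} ∩ {A | ∀ x : n → ℂ, 0 ≤ star x ⬝ᵥ A.mulVec x})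
        ∩ {A | A.trace = 1} := by
    ext A
    simp only [Set.mem_setOf_eq, Set.mem_inter_iff, IsDensityMatrix, Matrix.posSemidef_iff_dotProduct_mulVec,
      Matrix.IsHermitian, and_assoc]
  rw [he2]
  exact (h1.inter h2).inter h3

/-- The measure-and-prepare map `X ↦ X₀₀ τ + X₁₁ ω`. -/
noncomputable def prepMap {d : ℕ} (τ ω : Matrix (Fin d) (Fin d) ℂ) :
    Matrix (Fin 2) (Fin 2) ℂ →ₗ[ℂ] Matrix (Fin d) (Fin d) ℂ where
  toFun X := X 0 0 • τ + X 1 1 • ω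
  map_add' X Y := by
    simp only [Matrix.add_apply, add_smul]; abel
  map_smul' c X := by
    simp only [Matrix.smul_apply, smul_eq_mul, mul_smul, RingHom.id_apply, smul_add]

lemma choi_prep {d : ℕ} (τ ω : Matrix (Fin d) (Fin d) ℂ) (p q : Fin 2 × Fin d) :
    choiMatrix (prepMap τ ω) p q =
      (if p.1 = 0 ∧ q.1 = 0 then τ p.2 q.2 else 0)
        + (if p.1 = 1 ∧ q.1 = 1 then ω p.2 q.2 else 0) := by
  simp only [choiMatrix, prepMap, Matrix.single, LinearMap.coe_mk, AddHom.coe_mk,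
    Matrix.of_apply, Matrix.add_apply, Matrix.smul_apply, smul_eq_mul, ite_mul, one_mul,
    zero_mul, eq_comm]

lemma choi_prep_psd {d : ℕ} {τ ω : Matrix (Fin d) (Fin d) ℂ}
    (hτ : τ.PosSemidef) (hω : ω.PosSemidef) :
    (choiMatrix (prepMap τ ω)).PosSemidef := by
  refine Matrix.PosSemidef.of_dotProduct_mulVec_nonneg ?_ ?_
  · apply Matrix.IsHermitian.ext
    rintro ⟨i, a⟩ ⟨j, b⟩
    rw [choi_prep, choi_prep]
    simp only [star_add, apply_ite (star : ℂ → ℂ), star_zero, hτ.1.apply, hω.1.apply]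
    simp [and_comm]
  · intro x
    have key : star x ⬝ᵥ (choiMatrix (prepMap τ ω)).mulVec x
        = star (fun a => x (0, a)) ⬝ᵥ τ.mulVec (fun a => x (0, a))
          + star (fun a => x (1, a)) ⬝ᵥ ω.mulVec (fun a => x (1, a)) := by
      simp only [dotProduct, Matrix.mulVec, Pi.star_apply,
        Fintype.sum_prod_type, Fin.sum_univ_two, choi_prep]
      simp [Finset.mul_sum, Finset.sum_add_distrib, mul_comm, mul_assoc, mul_left_comm]
    rw [key]
    exact add_nonneg (hτ.dotProduct_mulVec_nonneg _) (hω.dotProduct_mulVec_nonneg _)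

lemma ket1_eq : ket1 = Matrix.single (1 : Fin 2) 1 1 := by
  ext i j
  fin_cases i <;> fin_cases j <;>
    simp [ket1, Matrix.single, Matrix.diagonal]

lemma FE11_psd {d : ℕ} (F : Matrix (Fin 2) (Fin 2) ℂ →ₗ[ℂ] Matrix (Fin d) (Fin d) ℂ)
    (hC : (choiMatrix F).PosSemidef) : (F ket1).PosSemidef := by
  rw [ket1_eq]
  refine Matrix.PosSemidef.of_dotProduct_mulVec_nonneg ?_ ?_
  · apply Matrix.IsHermitian.ext
    intro a b
    exact hC.1.apply (1, a) (1, b)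
  · intro x
    have key : star x ⬝ᵥ (F (Matrix.single (1 : Fin 2) 1 1)).mulVec x
        = star (fun p : Fin 2 × Fin d => if p.1 = 1 then x p.2 else 0) ⬝ᵥ
            (choiMatrix F).mulVec (fun p : Fin 2 × Fin d => if p.1 = 1 then x p.2 else 0) := by
      simp only [dotProduct, Matrix.mulVec, Pi.star_apply,
        Fintype.sum_prod_type, Fin.sum_univ_two]
      simp [choiMatrix]
    rw [key]
    exact hC.dotProduct_mulVec_nonneg _

def d00 : Matrix (Fin 2) (Fin 2) ℂ := Matrix.diagonal ![1, 0]

lemma real_smul_mat {n m : Type*} (r : ℝ) (A : Matrix n m ℂ) :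
    r • A = (r : ℂ) • A := by
  ext i j; simp [Matrix.smul_apply, Complex.real_smul]

lemma piM_decomp (lam : ℝ) :
    piM (1/lam) = (1 - lam) • d00 + lam • ket1 := by
  ext i j
  fin_cases i <;> fin_cases j <;>
    simp [piM, d00, ket1, Matrix.diagonal, one_div_one_div, Complex.real_smul]

lemma F_piM {d : ℕ} (F : Matrix (Fin 2) (Fin 2) ℂ →ₗ[ℂ] Matrix (Fin d) (Fin d) ℂ)
    (lam : ℝ) :
    F (piM (1/lam)) = (1 - lam) • F d00 + lam • F ket1 := by
  rw [piM_decomp lam, real_smul_mat, real_smul_mat, map_add, _root_.map_smul,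
    _root_.map_smul, ← real_smul_mat, ← real_smul_mat]

lemma trace_ket1 : ket1.trace = 1 := by
  simp [ket1, Matrix.trace_diagonal]

lemma prep_apply {d : ℕ} (τ ω : Matrix (Fin d) (Fin d) ℂ) (X : Matrix (Fin 2) (Fin 2) ℂ) :
    prepMap τ ω X = X 0 0 • τ + X 1 1 • ω := rfl

lemma prep_ket1 {d : ℕ} (τ ω : Matrix (Fin d) (Fin d) ℂ) :
    prepMap τ ω ket1 = ω := by
  rw [prep_apply]
  simp [ket1, Matrix.diagonal]

lemma prep_d00 {d : ℕ} (τ ω : Matrix (Fin d) (Fin d) ℂ) :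
    prepMap τ ω d00 = τ := by
  rw [prep_apply]
  simp [d00, Matrix.diagonal]

lemma prep_trace {d : ℕ} {τ ω : Matrix (Fin d) (Fin d) ℂ}
    (hτ : τ.trace = 1) (hω : ω.trace = 1) (X : Matrix (Fin 2) (Fin 2) ℂ) :
    (prepMap τ ω X).trace = X.trace := by
  rw [prep_apply, Matrix.trace_add, Matrix.trace_smul, Matrix.trace_smul, hτ, hω,
    Matrix.trace_fin_two]
  simp

/-- one-shot work of formation from a dirty battery under GPO is
characterized by a line-segment condition (subspace-constrained max-relative
entropy). -/
theorem stmt_9 {d : ℕ} (ε M : ℝ) (hε : ε ∈ Set.Ico (0:ℝ) 1) (hM : 1 < M)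
    (𝓟 𝓔 : Set (Matrix (Fin d) (Fin d) ℂ))
    (h𝓟ne : 𝓟.Nonempty) (h𝓔ne : 𝓔.Nonempty)
    (h𝓟 : ∀ ρ ∈ 𝓟, IsDensityMatrix ρ) (h𝓔 : ∀ τ ∈ 𝓔, IsDensityMatrix τ) :
    (∃ F : Matrix (Fin 2) (Fin 2) ℂ →ₗ[ℂ] Matrix (Fin d) (Fin d) ℂ,
        IsCPTP F ∧ (∀ M' : ℝ, M ≤ M' → F (piM M') ∈ 𝓔) ∧
        ∃ ρ ∈ 𝓟, traceDist (F ket1) ρ ≤ ε) ↔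
      (∃ ω ∈ metBall ε 𝓟, ∃ τ ∈ closure 𝓔,
        ∀ lam ∈ Set.Ioc (0:ℝ) (1/M), (1 - lam) • τ + lam • ω ∈ 𝓔) := by
  have hM0 : (0:ℝ) < M := lt_trans zero_lt_one hM
  constructor
  · rintro ⟨F, ⟨hChoi, hTP⟩, hE, ρ, hρP, hρd⟩
    set ω := F ket1 with hω
    set τ := F d00 with hτ
    -- segment condition
    have hseg : ∀ lam ∈ Set.Ioc (0:ℝ) (1/M), (1 - lam) • τ + lam • ω ∈ 𝓔 := by
      rintro lam ⟨hl0, hl1⟩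
      have hM' : M ≤ 1/lam := by
        have := one_div_le_one_div_of_le hl0 hl1
        rwa [one_div_one_div] at this
      have := hE (1/lam) hM'
      rwa [F_piM F lam] at this
    refine ⟨ω, ⟨⟨FE11_psd F hChoi, by rw [hω, hTP, trace_ket1]⟩, ρ, hρP, hρd⟩, τ, ?_, hseg⟩
    -- τ ∈ closure 𝓔
    have hl : Filter.Tendsto (fun n : ℕ => (1/M) * (1/(n+1 : ℝ))) Filter.atTop (nhds 0) := by
      have := tendsto_one_div_add_atTop_nhds_zero_nat.const_mul (1/M)
      simpa using this
    have hg : ∀ n : ℕ, (1 - (1/M) * (1/(n+1:ℝ))) • τ + ((1/M) * (1/(n+1:ℝ))) • ω ∈ 𝓔 := by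
      intro n
      apply hseg
      constructor
      · positivity
      · have h1 : (1 : ℝ) ≤ (n+1 : ℝ) := by exact_mod_cast Nat.one_le_iff_ne_zero.2 (Nat.succ_ne_zero n)
        have : (1 : ℝ)/(n+1:ℝ) ≤ 1 := by
          rw [div_le_one (by positivity)]; exact h1
        calc (1/M) * (1/(n+1:ℝ)) ≤ (1/M) * 1 := by
              apply mul_le_mul_of_nonneg_left this (by positivity)
          _ = 1/M := mul_one _
    have htend : Filter.Tendsto
        (fun n : ℕ => (1 - (1/M) * (1/(n+1:ℝ))) • τ + ((1/M) * (1/(n+1:ℝ))) • ω)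
        Filter.atTop (nhds τ) := by
      have h1 : Filter.Tendsto (fun n : ℕ => (1 : ℝ) - (1/M) * (1/(n+1:ℝ)))
          Filter.atTop (nhds 1) := by
        have := (tendsto_const_nhds (x := (1:ℝ)) (f := Filter.atTop (α := ℕ))).sub hl
        simpa using this
      have := (h1.smul (tendsto_const_nhds (x := τ))).add (hl.smul (tendsto_const_nhds (x := ω)))
      simpa using this
    exact mem_closure_of_tendsto htend (Filter.Eventually.of_forall hg)
  · rintro ⟨ω, ⟨⟨hωpsd, hωtr⟩, ρ, hρP, hdist⟩, τ, hτcl, hseg⟩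
    have hτd : IsDensityMatrix τ :=
      closure_minimal (fun A hA => h𝓔 A hA) isClosed_density hτcl
    refine ⟨prepMap τ ω, ⟨choi_prep_psd hτd.1 hωpsd, prep_trace hτd.2 hωtr⟩, ?_, ρ, hρP, ?_⟩
    · intro M' hM'
      have hM'0 : (0:ℝ) < M' := lt_of_lt_of_le hM0 hM'
      have key : prepMap τ ω (piM M') = (1 - 1/M') • τ + (1/M') • ω := by
        have := F_piM (prepMap τ ω) (1/M')
        rw [one_div_one_div, prep_d00, prep_ket1] at this
        exact this
      rw [key]
      apply hseg
      exact ⟨by positivity, one_div_le_one_div_of_le hM0 hM'⟩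
    · rw [prep_ket1]; exact hdist
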